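/- Fix s, h ∈ ℂ. On A = ℂ[x⁰,x¹,x²,x³], let S be the ℂ-algebra endomorphism substituting x⁰ ↦ x⁰ − i(1−s)h and fixing x¹, x², x³ (this is the shift operator e^{(1−s)hP₀} with P₀ = −i∂₀), and define the operators x̂⁰_s := x⁰ + ihs·Σ_{k=1}^{3} x^k∘∂_k and x̂^j_s := x^j∘S for j = 1,2,3. Then [x̂⁰_s, x̂^j_s] = ih·x̂^j_s and [x̂^j_s, x̂^k_s] = 0 for all j,k ∈ {1,2,3}. -/

import Mathlib

open MvPolynomial

noncomputable section

/-- The multiplication-by-`x^μ` operator on `ℂ[x⁰,x¹,x²,x³]`. -/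
def Xop (μ : Fin 4) : Module.End ℂ (MvPolynomial (Fin 4) ℂ) :=
  LinearMap.mulLeft ℂ (X μ)

/-- The partial-derivative operator `∂_μ` on `ℂ[x⁰,x¹,x²,x³]`. -/
def Dop (μ : Fin 4) : Module.End ℂ (MvPolynomial (Fin 4) ℂ) :=
  (pderiv μ).toLinearMap

/-- The shift operator `e^{(1−s)hP₀}` (with `P₀ = −i∂₀`): the `ℂ`-algebra endomorphism
substituting `x⁰ ↦ x⁰ − i(1−s)h` and fixing `x¹, x², x³`. -/
def shiftOp (s h : ℂ) : Module.End ℂ (MvPolynomial (Fin 4) ℂ) :=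
  (aeval (fun μ : Fin 4 =>
    if μ = 0 then X 0 - C (Complex.I * (1 - s) * h) else X μ) :
      MvPolynomial (Fin 4) ℂ →ₐ[ℂ] MvPolynomial (Fin 4) ℂ).toLinearMap

/-- `x̂⁰_s := x⁰ + ihs·Σ_{k=1}^{3} x^k∘∂_k`. -/
def xhat0 (s h : ℂ) : Module.End ℂ (MvPolynomial (Fin 4) ℂ) :=
  Xop 0 + (Complex.I * h * s) • ∑ k ∈ ({1, 2, 3} : Finset (Fin 4)), Xop k * Dop k

/-- `x̂^j_s := x^j ∘ S`. -/
def xhatSp (s h : ℂ) (j : Fin 4) : Module.End ℂ (MvPolynomial (Fin 4) ℂ) :=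
  Xop j * shiftOp s h

lemma Xop_comm (μ ν : Fin 4) : Xop μ * Xop ν = Xop ν * Xop μ := by
  refine LinearMap.ext fun p => ?_
  simp only [Xop, Module.End.mul_apply, LinearMap.mulLeft_apply]
  ring

lemma shift_X {j : Fin 4} (hj : j ≠ 0) :
    shiftOp s h * Xop j = Xop j * shiftOp s h := by
  refine LinearMap.ext fun p => ?_
  simp [Xop, shiftOp, Module.End.mul_apply, hj]

lemma shift_X0 :
    shiftOp s h * Xop 0 = Xop 0 * shiftOp s h
      - (Complex.I * (1 - s) * h) • shiftOp s h := by
  refine LinearMap.ext fun p => ?_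
  simp [Xop, shiftOp, Module.End.mul_apply, smul_eq_C_mul]
  ring

lemma pderiv_aeval_shift (c : ℂ) (k : Fin 4) (p : MvPolynomial (Fin 4) ℂ) :
    pderiv k ((aeval (fun μ : Fin 4 => if μ = 0 then X 0 - C c else X μ) :
        MvPolynomial (Fin 4) ℂ →ₐ[ℂ] MvPolynomial (Fin 4) ℂ) p)
      = (aeval (fun μ : Fin 4 => if μ = 0 then X 0 - C c else X μ) :
        MvPolynomial (Fin 4) ℂ →ₐ[ℂ] MvPolynomial (Fin 4) ℂ) (pderiv k p) := by
  induction p using MvPolynomial.induction_on with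
  | C a => simp
  | add p q hp hq => simp only [map_add, hp, hq]
  | mul_X p n ih =>
    have hx : pderiv k ((aeval (fun μ : Fin 4 => if μ = 0 then X 0 - C c else X μ) :
        MvPolynomial (Fin 4) ℂ →ₐ[ℂ] MvPolynomial (Fin 4) ℂ) (X n))
        = (aeval (fun μ : Fin 4 => if μ = 0 then X 0 - C c else X μ) :
        MvPolynomial (Fin 4) ℂ →ₐ[ℂ] MvPolynomial (Fin 4) ℂ) (pderiv k (X n)) := by
      by_cases hn : n = 0 <;> by_cases hk : k = n <;>
        simp [hn, hk, pderiv_X, Pi.single_apply]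
    simp only [map_mul, pderiv_mul, ih, map_add, hx]

lemma Dop_shift (k : Fin 4) :
    Dop k * shiftOp s h = shiftOp s h * Dop k := by
  refine LinearMap.ext fun p => ?_
  simpa [Dop, shiftOp, Module.End.mul_apply] using
    pderiv_aeval_shift (Complex.I * (1 - s) * h) k p

lemma Dop_Xop_same (k : Fin 4) : Dop k * Xop k = Xop k * Dop k + 1 := by
  refine LinearMap.ext fun p => ?_
  simp [Dop, Xop, Module.End.mul_apply, pderiv_mul, pderiv_X, Pi.single_apply]

lemma Dop_Xop_ne {j k : Fin 4} (hjk : j ≠ k) : Dop k * Xop j = Xop j * Dop k := by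
  refine LinearMap.ext fun p => ?_
  simp [Dop, Xop, Module.End.mul_apply, pderiv_mul, pderiv_X, Pi.single_apply, (Ne.symm hjk)]

lemma shift_sq_form {j k : Fin 4} (hk : k ≠ 0) :
    (Xop j * shiftOp s h) * (Xop k * shiftOp s h)
      = Xop j * (Xop k * (shiftOp s h * shiftOp s h)) := by
  rw [mul_assoc, ← mul_assoc (shiftOp s h), shift_X hk, mul_assoc]

lemma hB (j k : Fin 4) (hk : k ≠ 0) :
    (Xop j * shiftOp s h) * (Xop k * Dop k)
      = Xop j * (Xop k * (Dop k * shiftOp s h)) := by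
  rw [mul_assoc, ← mul_assoc (shiftOp s h), shift_X hk, mul_assoc, ← Dop_shift]

lemma hA_ne (j k : Fin 4) (hjk : j ≠ k) :
    (Xop k * Dop k) * (Xop j * shiftOp s h)
      = Xop j * (Xop k * (Dop k * shiftOp s h)) := by
  rw [mul_assoc, ← mul_assoc (Dop k), Dop_Xop_ne hjk, mul_assoc, ← mul_assoc,
    Xop_comm k j, mul_assoc]

lemma hA_eq (j : Fin 4) :
    (Xop j * Dop j) * (Xop j * shiftOp s h)
      = Xop j * (Xop j * (Dop j * shiftOp s h)) + Xop j * shiftOp s h := by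
  rw [mul_assoc, ← mul_assoc (Dop j), Dop_Xop_same, add_mul, one_mul, mul_add,
    mul_assoc]

lemma commk (j k : Fin 4) (hk : k ≠ 0) :
    Xop k * Dop k * ((Xop j * shiftOp s h)) - (Xop j * shiftOp s h) * (Xop k * Dop k)
      = if k = j then Xop j * shiftOp s h else 0 := by
  by_cases hkj : k = j
  · subst hkj
    rw [hA_eq, hB k k hk, if_pos rfl, add_sub_cancel_left]
  · rw [hA_ne j k (Ne.symm hkj), hB j k hk, if_neg hkj, sub_self]

lemma comm0 (j : Fin 4) :
    Xop 0 * (Xop j * shiftOp s h) - (Xop j * shiftOp s h) * Xop 0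
      = (Complex.I * (1 - s) * h) • (Xop j * shiftOp s h) := by
  rw [mul_assoc, shift_X0, mul_sub, mul_smul_comm, ← mul_assoc, Xop_comm 0 j, mul_assoc,
    sub_sub_cancel]

/-- The Abelian-twist family of Heisenberg realizations of κ-Minkowski spacetime:
`[x̂⁰_s, x̂^j_s] = ih·x̂^j_s` and `[x̂^j_s, x̂^k_s] = 0`. -/
theorem abelian_realization_kappa_minkowski (s h : ℂ) :
    (∀ j ∈ ({1, 2, 3} : Finset (Fin 4)),
      xhat0 s h * xhatSp s h j - xhatSp s h j * xhat0 s h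
        = (Complex.I * h) • xhatSp s h j) ∧
    (∀ j ∈ ({1, 2, 3} : Finset (Fin 4)), ∀ k ∈ ({1, 2, 3} : Finset (Fin 4)),
      xhatSp s h j * xhatSp s h k - xhatSp s h k * xhatSp s h j = 0) := by
  constructor
  · intro j hj
    have hj0 : j ≠ 0 := by fin_cases hj <;> decide
    unfold xhat0 xhatSp
    rw [add_mul, mul_add, smul_mul_assoc, mul_smul_comm, Finset.sum_mul,
      Finset.mul_sum]
    have hsum : ∀ k ∈ ({1, 2, 3} : Finset (Fin 4)),
        Xop k * Dop k * (Xop j * shiftOp s h)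
          - (Xop j * shiftOp s h) * (Xop k * Dop k)
          = if k = j then Xop j * shiftOp s h else 0 := by
      intro k hk
      exact commk j k (by fin_cases hk <;> decide)
    calc Xop 0 * (Xop j * shiftOp s h)
          + (Complex.I * h * s) • ∑ k ∈ ({1, 2, 3} : Finset (Fin 4)),
              Xop k * Dop k * (Xop j * shiftOp s h)
          - (Xop j * shiftOp s h * Xop 0
          + (Complex.I * h * s) • ∑ k ∈ ({1, 2, 3} : Finset (Fin 4)),
              Xop j * shiftOp s h * (Xop k * Dop k))
        = (Xop 0 * (Xop j * shiftOp s h) - Xop j * shiftOp s h * Xop 0)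
          + (Complex.I * h * s) • ∑ k ∈ ({1, 2, 3} : Finset (Fin 4)),
              (Xop k * Dop k * (Xop j * shiftOp s h)
                - Xop j * shiftOp s h * (Xop k * Dop k)) := by
          rw [Finset.sum_sub_distrib, smul_sub]; abel
      _ = (Complex.I * (1 - s) * h) • (Xop j * shiftOp s h)
          + (Complex.I * h * s) • ∑ k ∈ ({1, 2, 3} : Finset (Fin 4)),
              (if k = j then Xop j * shiftOp s h else 0) := by
          rw [comm0, Finset.sum_congr rfl hsum]
      _ = (Complex.I * (1 - s) * h) • (Xop j * shiftOp s h)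
          + (Complex.I * h * s) • (Xop j * shiftOp s h) := by
          rw [Finset.sum_ite_eq' ({1, 2, 3} : Finset (Fin 4)) j
            (fun _ => Xop j * shiftOp s h), if_pos hj]
      _ = (Complex.I * h) • (Xop j * shiftOp s h) := by
          rw [← add_smul]; congr 1; ring
  · intro j hj k hk
    have hj0 : j ≠ 0 := by fin_cases hj <;> decide
    have hk0 : k ≠ 0 := by fin_cases hk <;> decide
    unfold xhatSp
    rw [shift_sq_form hk0, shift_sq_form hj0, ← mul_assoc (Xop j),
      ← mul_assoc (Xop k), Xop_comm j k, sub_self]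


end
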